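/- Let d ≥ 1 and z ≥ 1 be integers, and let A_n, B_n, C_n be the convergent sequences of the periodic bifurcating continued fraction [{z, 2z/d, repeat(3dz/(z³+d²), 3z, 3z/d)}, {0, −z²/d, repeat(−3z²/(z³+d²), −3dz²/(z³+d²), −3z²/d)}]. Then for every n ≥ 0, one has μ_{n+1}(3,2,d,z) ≠ 0, C_n ≠ 0, and A_n/C_n = μ_{n+1}(3,0,d,z)/μ_{n+1}(3,2,d,z) and B_n/C_n = μ_{n+1}(3,1,d,z)/μ_{n+1}(3,2,d,z). -/

import Mathlib

/-- The generalized Rédei polynomials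
`μ_n(e,k,d,z) = Σ_{h=0}^{n} C(n, e·h − k) · d^{(e−1)h − k} · z^{n − e·h + k}`,
where the binomial coefficient is `0` when `e·h − k < 0` or `e·h − k > n`. -/
def mu (e k : ℕ) (d z : ℤ) (n : ℕ) : ℤ :=
  ∑ h ∈ Finset.range (n + 1),
    if k ≤ e * h then
      (n.choose (e * h - k) : ℤ) * d ^ ((e - 1) * h - k) * z ^ (n + k - e * h)
    else 0

/-- The convergent sequences of the bifurcating continued fraction
`[{p_0,p_1,...},{q_0,q_1,...}]`, shifted by two: `bcf p q x0 x1 x2 m = X_{m-2}`,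
where `X_{-2} = x0`, `X_{-1} = x1`, `X_0 = x2` and
`X_n = p_n X_{n-1} + q_n X_{n-2} + X_{n-3}` for `n ≥ 1`.
So `A_n = bcf p q 0 1 (p 0) (n+2)`, `B_n = bcf p q 1 0 (q 0) (n+2)`,
`C_n = bcf p q 0 0 1 (n+2)`. -/
def bcf (p q : ℕ → ℚ) (x0 x1 x2 : ℚ) : ℕ → ℚ
  | 0 => x0
  | 1 => x1
  | 2 => x2
  | n + 3 =>
      p (n + 1) * bcf p q x0 x1 x2 (n + 2) + q (n + 1) * bcf p q x0 x1 x2 (n + 1)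
        + bcf p q x0 x1 x2 n

lemma bcf_succ (p q : ℕ → ℚ) (x0 x1 x2 : ℚ) (n : ℕ) :
    bcf p q x0 x1 x2 (n+3) = p (n + 1) * bcf p q x0 x1 x2 (n + 2)
      + q (n + 1) * bcf p q x0 x1 x2 (n + 1) + bcf p q x0 x1 x2 n := rfl

noncomputable def Wq (d z : ℤ) : ℚ := (z:ℚ)^3 + (d:ℚ)^2

noncomputable def Kf (d z : ℤ) (n : ℕ) : ℚ :=
  (if n % 3 = 1 then (d:ℚ) else if n % 3 = 2 then Wq d z else 1) * (Wq d z) ^ (n / 3)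

def Good (d z : ℤ) (p q : ℕ → ℚ) (n : ℕ) : Prop :=
  Kf d z n * bcf p q 0 1 ((z:ℚ)) (n+2) = (mu 3 0 d z (n+1) : ℚ) ∧
  Kf d z n * bcf p q 1 0 0 (n+2) = (mu 3 1 d z (n+1) : ℚ) ∧
  Kf d z n * bcf p q 0 0 1 (n+2) = (mu 3 2 d z (n+1) : ℚ)

-- the three one-step helpers
lemma step0h (w d z v B0 B1 B2 B3 M0 M1 M2 M3 : ℚ) (hw : w ≠ 0) (hd : d ≠ 0)
    (h0 : v * B0 = M0) (h1 : d*v * B1 = M1) (h2 : w*v * B2 = M2)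
    (hB : B3 = (3*z) * B2 + (-(3*d*z^2)/w) * B1 + B0)
    (hM : M3 = 3*z*M2 - 3*z^2*M1 + w*M0) :
    w*v * B3 = M3 := by
  rw [hM, hB, ← h0, ← h1, ← h2]
  field_simp
  ring

lemma step1h (w d z v B0 B1 B2 B3 M0 M1 M2 M3 : ℚ) (hw : w ≠ 0) (hd : d ≠ 0)
    (h0 : d*v * B0 = M0) (h1 : w*v * B1 = M1) (h2 : w*v * B2 = M2)
    (hB : B3 = (3*z/d) * B2 + (-(3*z^2)/d) * B1 + B0)
    (hM : M3 = 3*z*M2 - 3*z^2*M1 + w*M0) :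
    d*(w*v) * B3 = M3 := by
  rw [hM, hB, ← h0, ← h1, ← h2]
  field_simp
  ring

lemma step2h (w d z v B0 B1 B2 B3 M0 M1 M2 M3 : ℚ) (hw : w ≠ 0) (hd : d ≠ 0)
    (h0 : w*v * B0 = M0) (h1 : w*v * B1 = M1) (h2 : d*(w*v) * B2 = M2)
    (hB : B3 = (3*d*z/w) * B2 + (-(3*z^2)/w) * B1 + B0)
    (hM : M3 = 3*z*M2 - 3*z^2*M1 + w*M0) :
    w*(w*v) * B3 = M3 := by
  rw [hM, hB, ← h0, ← h1, ← h2]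
  field_simp
  ring

lemma mu0_eq (d z : ℤ) (m : ℕ) : mu 3 0 d z m
    = z ^ m + ∑ h ∈ Finset.range m,
        (m.choose (3*h+3) : ℤ) * d ^ (2*h+2) * z ^ (m - (3*h+3)) := by
  unfold mu
  rw [Finset.sum_range_succ']
  have h0 : (if (0:ℕ) ≤ 3*0 then ((m.choose (3*0-0)) : ℤ) * d ^ ((3-1)*0-0) * z ^ (m+0-3*0) else 0) = z^m := by norm_num
  have hs : ∑ h ∈ Finset.range m,
      (if (0:ℕ) ≤ 3*(h+1) then ((m.choose (3*(h+1)-0)) : ℤ) * d ^ ((3-1)*(h+1)-0) * z ^ (m+0-3*(h+1)) else 0)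
      = ∑ h ∈ Finset.range m, (m.choose (3*h+3) : ℤ) * d ^ (2*h+2) * z ^ (m - (3*h+3)) := by
    refine Finset.sum_congr rfl fun h _ => ?_
    rw [if_pos (by omega)]
    have e1 : 3*(h+1) - 0 = 3*h+3 := by omega
    have e2 : (3-1)*(h+1) - 0 = 2*h+2 := by omega
    have e3 : m + 0 - 3*(h+1) = m - (3*h+3) := by omega
    rw [e1, e2, e3]
  rw [h0, hs, add_comm]

lemma mu1_eq (d z : ℤ) (m : ℕ) : mu 3 1 d z m
    = ∑ h ∈ Finset.range m,
        (m.choose (3*h+2) : ℤ) * d ^ (2*h+1) * z ^ (m - (3*h+2)) := by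
  unfold mu
  rw [Finset.sum_range_succ']
  have h0 : (if (1:ℕ) ≤ 3*0 then (m.choose (3*0-1) : ℤ) * d ^ ((3-1)*0-1) * z ^ (m+1-3*0) else 0) = 0 := by
    rw [if_neg (by omega)]
  rw [h0, add_zero]
  refine Finset.sum_congr rfl fun h _ => ?_
  rw [if_pos (by omega)]
  have e1 : 3*(h+1) - 1 = 3*h+2 := by omega
  have e2 : (3-1)*(h+1) - 1 = 2*h+1 := by omega
  have e3 : m + 1 - 3*(h+1) = m - (3*h+2) := by omega
  rw [e1, e2, e3]

lemma mu2_eq (d z : ℤ) (m : ℕ) : mu 3 2 d z m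
    = ∑ h ∈ Finset.range m,
        (m.choose (3*h+1) : ℤ) * d ^ (2*h) * z ^ (m - (3*h+1)) := by
  unfold mu
  rw [Finset.sum_range_succ']
  have h0 : (if (2:ℕ) ≤ 3*0 then (m.choose (3*0-2) : ℤ) * d ^ ((3-1)*0-2) * z ^ (m+2-3*0) else 0) = 0 := by
    rw [if_neg (by omega)]
  rw [h0, add_zero]
  refine Finset.sum_congr rfl fun h _ => ?_
  rw [if_pos (by omega)]
  have e1 : 3*(h+1) - 2 = 3*h+1 := by omega
  have e2 : (3-1)*(h+1) - 2 = 2*h := by omega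
  have e3 : m + 2 - 3*(h+1) = m - (3*h+1) := by omega
  rw [e1, e2, e3]

lemma mu0_eq' (d z : ℤ) (m : ℕ) : mu 3 0 d z m
    = ∑ h ∈ Finset.range (m+1), (m.choose (3*h) : ℤ) * d ^ (2*h) * z ^ (m - 3*h) := by
  unfold mu
  refine Finset.sum_congr rfl fun h _ => ?_
  rw [if_pos (by omega)]
  have e2 : (3-1)*h - 0 = 2*h := by omega
  have e3 : m + 0 - 3*h = m - 3*h := by omega
  rw [Nat.sub_zero, e2, e3]

-- key shifting lemma
lemma key (z : ℤ) (n a : ℕ) (ha : 0 < a) (g : ℕ → ℤ) :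
    ∑ h ∈ Finset.range (n+1), (n.choose (3*h+a) : ℤ) * g h * z ^ (n+1 - (3*h+a))
    = z * ∑ h ∈ Finset.range n, (n.choose (3*h+a) : ℤ) * g h * z ^ (n - (3*h+a)) := by
  rw [Finset.mul_sum, Finset.sum_range_succ]
  rw [Nat.choose_eq_zero_of_lt (by omega)]
  push_cast
  rw [zero_mul, zero_mul, add_zero]
  refine Finset.sum_congr rfl fun h hh => ?_
  rcases le_or_gt (3*h+a) n with hle | hlt
  · have : n+1 - (3*h+a) = (n - (3*h+a)) + 1 := by omega
    rw [this, pow_succ]; ring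
  · rw [Nat.choose_eq_zero_of_lt hlt]; push_cast; ring

lemma keyd (d : ℤ) (n a : ℕ) (ha : 0 < a) (g : ℕ → ℤ) (b c : ℕ) (hbc : c = b + 1) :
    ∑ h ∈ Finset.range (n+1), (n.choose (3*h+a) : ℤ) * d^(2*h+c) * g h
    = d * ∑ h ∈ Finset.range n, (n.choose (3*h+a) : ℤ) * d^(2*h+b) * g h := by
  subst hbc
  rw [Finset.mul_sum, Finset.sum_range_succ, Nat.choose_eq_zero_of_lt (by omega)]
  push_cast
  rw [zero_mul, zero_mul, add_zero]
  refine Finset.sum_congr rfl fun h _ => ?_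
  rw [show 2*h+(b+1) = (2*h+b)+1 from rfl, pow_succ]
  ring

lemma mu_step2 (d z : ℤ) (n : ℕ) :
    mu 3 2 d z (n+1) = z * mu 3 2 d z n + mu 3 0 d z n := by
  rw [mu2_eq d z (n+1), mu2_eq d z n, mu0_eq' d z n]
  have split : ∑ h ∈ Finset.range (n+1),
      ((n+1).choose (3*h+1) : ℤ) * d ^ (2*h) * z ^ (n+1 - (3*h+1))
      = (∑ h ∈ Finset.range (n+1), (n.choose (3*h+1) : ℤ) * (fun h => d ^ (2*h)) h * z ^ (n+1 - (3*h+1)))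
        + ∑ h ∈ Finset.range (n+1), (n.choose (3*h) : ℤ) * d ^ (2*h) * z ^ (n - 3*h) := by
    rw [← Finset.sum_add_distrib]
    refine Finset.sum_congr rfl fun h _ => ?_
    have pas : ((n+1).choose (3*h+1) : ℤ) = (n.choose (3*h) : ℤ) + (n.choose (3*h+1) : ℤ) := by
      exact_mod_cast Nat.choose_succ_succ n (3*h)
    have e : n+1 - (3*h+1) = n - 3*h := by omega
    rw [pas, e]
    ring
  rw [split, key z n 1 one_pos (fun h => d ^ (2*h))]

lemma mu_step1 (d z : ℤ) (n : ℕ) :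
    mu 3 1 d z (n+1) = z * mu 3 1 d z n + d * mu 3 2 d z n := by
  rw [mu1_eq d z (n+1), mu1_eq d z n, mu2_eq d z n]
  have split : ∑ h ∈ Finset.range (n+1),
      ((n+1).choose (3*h+2) : ℤ) * d ^ (2*h+1) * z ^ (n+1 - (3*h+2))
      = (∑ h ∈ Finset.range (n+1), (n.choose (3*h+2) : ℤ) * (fun h => d ^ (2*h+1)) h * z ^ (n+1 - (3*h+2)))
        + ∑ h ∈ Finset.range (n+1), (n.choose (3*h+1) : ℤ) * d ^ (2*h+1) * (fun h => z ^ (n - (3*h+1))) h := by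
    rw [← Finset.sum_add_distrib]
    refine Finset.sum_congr rfl fun h _ => ?_
    have pas : ((n+1).choose (3*h+2) : ℤ) = (n.choose (3*h+1) : ℤ) + (n.choose (3*h+2) : ℤ) := by
      exact_mod_cast Nat.choose_succ_succ n (3*h+1)
    have e : n+1 - (3*h+2) = n - (3*h+1) := by omega
    rw [pas, e]
    ring
  rw [split, key z n 2 two_pos (fun h => d ^ (2*h+1)),
    keyd d n 1 one_pos (fun h => z ^ (n - (3*h+1))) 0 1 rfl]
  norm_num

lemma mu_step0 (d z : ℤ) (n : ℕ) :
    mu 3 0 d z (n+1) = z * mu 3 0 d z n + d * mu 3 1 d z n := by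
  rw [mu0_eq d z (n+1), mu0_eq d z n, mu1_eq d z n]
  have split : ∑ h ∈ Finset.range (n+1),
      ((n+1).choose (3*h+3) : ℤ) * d ^ (2*h+2) * z ^ (n+1 - (3*h+3))
      = (∑ h ∈ Finset.range (n+1), (n.choose (3*h+3) : ℤ) * (fun h => d ^ (2*h+2)) h * z ^ (n+1 - (3*h+3)))
        + ∑ h ∈ Finset.range (n+1), (n.choose (3*h+2) : ℤ) * d ^ (2*h+2) * (fun h => z ^ (n - (3*h+2))) h := by
    rw [← Finset.sum_add_distrib]
    refine Finset.sum_congr rfl fun h _ => ?_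
    have pas : ((n+1).choose (3*h+3) : ℤ) = (n.choose (3*h+2) : ℤ) + (n.choose (3*h+3) : ℤ) := by
      exact_mod_cast Nat.choose_succ_succ n (3*h+2)
    have e : n+1 - (3*h+3) = n - (3*h+2) := by omega
    rw [pas, e]
    ring
  rw [split, key z n 3 three_pos (fun h => d ^ (2*h+2)),
    keyd d n 2 two_pos (fun h => z ^ (n - (3*h+2))) 1 2 rfl]
  rw [pow_succ]
  ring

lemma mu_cubic0 (d z : ℤ) (n : ℕ) :
    mu 3 0 d z (n+3) = 3*z * mu 3 0 d z (n+2) - 3*z^2 * mu 3 0 d z (n+1)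
      + (z^3 + d^2) * mu 3 0 d z n := by
  have hA2 := mu_step0 d z (n+2); have hB1 := mu_step1 d z (n+1)
  have hC0 := mu_step2 d z n; have hA1 := mu_step0 d z (n+1)
  have hA0 := mu_step0 d z n; have hB0 := mu_step1 d z n
  linear_combination hA2 + d*hB1 + d^2*hC0 - 2*z*hA1 + z^2*hA0 - z*d*hB0

lemma mu_cubic1 (d z : ℤ) (n : ℕ) :
    mu 3 1 d z (n+3) = 3*z * mu 3 1 d z (n+2) - 3*z^2 * mu 3 1 d z (n+1)
      + (z^3 + d^2) * mu 3 1 d z n := by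
  have hE1 := mu_step1 d z (n+2); have hE2 := mu_step2 d z (n+1)
  have hE3 := mu_step0 d z n; have hE4 := mu_step1 d z (n+1)
  have hE5 := mu_step1 d z n; have hE6 := mu_step2 d z n
  linear_combination hE1 + d*hE2 + d*hE3 - 2*z*hE4 + z^2*hE5 - z*d*hE6

lemma mu_cubic2 (d z : ℤ) (n : ℕ) :
    mu 3 2 d z (n+3) = 3*z * mu 3 2 d z (n+2) - 3*z^2 * mu 3 2 d z (n+1)
      + (z^3 + d^2) * mu 3 2 d z n := by
  have hE1 := mu_step2 d z (n+2); have hE2 := mu_step0 d z (n+1)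
  have hE3 := mu_step1 d z n; have hE4 := mu_step2 d z (n+1)
  have hE5 := mu_step2 d z n; have hE6 := mu_step0 d z n
  linear_combination hE1 + hE2 + d*hE3 - 2*z*hE4 + z^2*hE5 - z*hE6

lemma mu2_pos (d z : ℤ) (hd : 1 ≤ d) (hz : 1 ≤ z) (n : ℕ) :
    0 < mu 3 2 d z (n+1) := by
  rw [mu2_eq]
  have : ∀ h ∈ Finset.range (n+1), 0 ≤ ((n+1).choose (3*h+1) : ℤ) * d ^ (2*h) * z ^ ((n+1) - (3*h+1)) := by
    intro h _
    positivity
  refine Finset.sum_pos' this ⟨0, Finset.mem_range.mpr (by omega), ?_⟩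
  have : ((n+1).choose 1 : ℤ) = (n+1 : ℤ) := by norm_num
  norm_num
  positivity

-- continuation fragment: assumes s3 content; test good_step case r=0
lemma Wq_pos (d z : ℤ) (hd : 1 ≤ d) (hz : 1 ≤ z) : 0 < Wq d z := by
  have hz1 : (1:ℚ) ≤ (z:ℚ) := by exact_mod_cast hz
  have hd1 : (1:ℚ) ≤ (d:ℚ) := by exact_mod_cast hd
  have hz0 : (0:ℚ) < (z:ℚ) := lt_of_lt_of_le zero_lt_one hz1
  have h3 : (0:ℚ) < (z:ℚ)^3 := pow_pos hz0 3
  have h4 : (0:ℚ) ≤ (d:ℚ)^2 := sq_nonneg _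
  unfold Wq
  linarith

lemma good_step (d z : ℤ) (hd : 1 ≤ d) (hz : 1 ≤ z) (p q : ℕ → ℚ)
    (hp2 : ∀ n, 2 ≤ n → n % 3 = 2 →
      p n = 3 * (d : ℚ) * (z : ℚ) / ((z : ℚ) ^ 3 + (d : ℚ) ^ 2))
    (hq2 : ∀ n, 2 ≤ n → n % 3 = 2 →
      q n = -(3 * (z : ℚ) ^ 2) / ((z : ℚ) ^ 3 + (d : ℚ) ^ 2))
    (hp3 : ∀ n, 2 ≤ n → n % 3 = 0 → p n = 3 * (z : ℚ))
    (hq3 : ∀ n, 2 ≤ n → n % 3 = 0 →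
      q n = -(3 * (d : ℚ) * (z : ℚ) ^ 2) / ((z : ℚ) ^ 3 + (d : ℚ) ^ 2))
    (hp4 : ∀ n, 2 ≤ n → n % 3 = 1 → p n = 3 * (z : ℚ) / (d : ℚ))
    (hq4 : ∀ n, 2 ≤ n → n % 3 = 1 → q n = -(3 * (z : ℚ) ^ 2) / (d : ℚ))
    (n : ℕ) (h0 : Good d z p q n) (h1 : Good d z p q (n+1)) (h2 : Good d z p q (n+2)) :
    Good d z p q (n+3) := by
  have hd0 : (d:ℚ) ≠ 0 := by
    have : (0:ℚ) < (d:ℚ) := by exact_mod_cast lt_of_lt_of_le Int.zero_lt_one hd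
    exact ne_of_gt this
  have hw : Wq d z ≠ 0 := ne_of_gt (Wq_pos d z hd hz)
  have hWq : ((z:ℚ)^3 + (d:ℚ)^2) = Wq d z := rfl
  obtain ⟨hA0, hB0, hC0⟩ := h0
  obtain ⟨hA1, hB1, hC1⟩ := h1
  obtain ⟨hA2, hB2, hC2⟩ := h2
  have cubA := mu_cubic0 d z (n+1)
  have cubB := mu_cubic1 d z (n+1)
  have cubC := mu_cubic2 d z (n+1)
  have castA : (mu 3 0 d z (n+4) : ℚ) = 3*(z:ℚ)*(mu 3 0 d z (n+3) : ℚ)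
      - 3*(z:ℚ)^2*(mu 3 0 d z (n+2) : ℚ) + Wq d z*(mu 3 0 d z (n+1) : ℚ) := by
    rw [← hWq]; exact_mod_cast cubA
  have castB : (mu 3 1 d z (n+4) : ℚ) = 3*(z:ℚ)*(mu 3 1 d z (n+3) : ℚ)
      - 3*(z:ℚ)^2*(mu 3 1 d z (n+2) : ℚ) + Wq d z*(mu 3 1 d z (n+1) : ℚ) := by
    rw [← hWq]; exact_mod_cast cubB
  have castC : (mu 3 2 d z (n+4) : ℚ) = 3*(z:ℚ)*(mu 3 2 d z (n+3) : ℚ)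
      - 3*(z:ℚ)^2*(mu 3 2 d z (n+2) : ℚ) + Wq d z*(mu 3 2 d z (n+1) : ℚ) := by
    rw [← hWq]; exact_mod_cast cubC
  rcases (by omega : n % 3 = 0 ∨ n % 3 = 1 ∨ n % 3 = 2) with hr|hr|hr
  · -- r = 0
    have e0 : Kf d z n = Wq d z ^ (n/3) := by
      unfold Kf; rw [if_neg (by omega), if_neg (by omega), one_mul]
    have e1 : Kf d z (n+1) = (d:ℚ) * Wq d z ^ (n/3) := by
      unfold Kf; rw [if_pos (by omega), show (n+1)/3 = n/3 by omega]
    have e2 : Kf d z (n+2) = Wq d z * Wq d z ^ (n/3) := by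
      unfold Kf; rw [if_neg (by omega), if_pos (by omega), show (n+2)/3 = n/3 by omega]
    have e3 : Kf d z (n+3) = Wq d z * Wq d z ^ (n/3) := by
      unfold Kf
      rw [if_neg (by omega), if_neg (by omega), one_mul, show (n+3)/3 = n/3 + 1 by omega,
        pow_succ, mul_comm]
    have hp := hp3 (n+3) (by omega) (by omega)
    have hq := hq3 (n+3) (by omega) (by omega)
    rw [hWq] at hq
    rw [e0] at hA0 hB0 hC0
    rw [e1] at hA1 hB1 hC1
    rw [e2] at hA2 hB2 hC2
    refine ⟨?_, ?_, ?_⟩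
    · show Kf d z (n+3) * bcf p q 0 1 (z:ℚ) (n+2+3) = (mu 3 0 d z (n+4) : ℚ)
      rw [e3]
      exact step0h (Wq d z) (d:ℚ) (z:ℚ) (Wq d z ^ (n/3)) _ _ _ _ _ _ _ _ hw hd0
        hA0 hA1 hA2 (by rw [bcf_succ, hp, hq]) castA
    · show Kf d z (n+3) * bcf p q 1 0 0 (n+2+3) = (mu 3 1 d z (n+4) : ℚ)
      rw [e3]
      exact step0h (Wq d z) (d:ℚ) (z:ℚ) (Wq d z ^ (n/3)) _ _ _ _ _ _ _ _ hw hd0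
        hB0 hB1 hB2 (by rw [bcf_succ, hp, hq]) castB
    · show Kf d z (n+3) * bcf p q 0 0 1 (n+2+3) = (mu 3 2 d z (n+4) : ℚ)
      rw [e3]
      exact step0h (Wq d z) (d:ℚ) (z:ℚ) (Wq d z ^ (n/3)) _ _ _ _ _ _ _ _ hw hd0
        hC0 hC1 hC2 (by rw [bcf_succ, hp, hq]) castC
  · -- r = 1
    have e0 : Kf d z n = (d:ℚ) * Wq d z ^ (n/3) := by
      unfold Kf; rw [if_pos (by omega)]
    have e1 : Kf d z (n+1) = Wq d z * Wq d z ^ (n/3) := by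
      unfold Kf; rw [if_neg (by omega), if_pos (by omega), show (n+1)/3 = n/3 by omega]
    have e2 : Kf d z (n+2) = Wq d z * Wq d z ^ (n/3) := by
      unfold Kf
      rw [if_neg (by omega), if_neg (by omega), show (n+2)/3 = n/3 + 1 by omega, pow_succ]
      ring
    have e3 : Kf d z (n+3) = (d:ℚ) * (Wq d z * Wq d z ^ (n/3)) := by
      unfold Kf
      rw [if_pos (by omega), show (n+3)/3 = n/3 + 1 by omega, pow_succ]
      ring
    have hp := hp4 (n+3) (by omega) (by omega)
    have hq := hq4 (n+3) (by omega) (by omega)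
    rw [e0] at hA0 hB0 hC0
    rw [e1] at hA1 hB1 hC1
    rw [e2] at hA2 hB2 hC2
    refine ⟨?_, ?_, ?_⟩
    · show Kf d z (n+3) * bcf p q 0 1 (z:ℚ) (n+2+3) = (mu 3 0 d z (n+4) : ℚ)
      rw [e3]
      exact step1h (Wq d z) (d:ℚ) (z:ℚ) (Wq d z ^ (n/3)) _ _ _ _ _ _ _ _ hw hd0
        hA0 hA1 hA2 (by rw [bcf_succ, hp, hq]) castA
    · show Kf d z (n+3) * bcf p q 1 0 0 (n+2+3) = (mu 3 1 d z (n+4) : ℚ)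
      rw [e3]
      exact step1h (Wq d z) (d:ℚ) (z:ℚ) (Wq d z ^ (n/3)) _ _ _ _ _ _ _ _ hw hd0
        hB0 hB1 hB2 (by rw [bcf_succ, hp, hq]) castB
    · show Kf d z (n+3) * bcf p q 0 0 1 (n+2+3) = (mu 3 2 d z (n+4) : ℚ)
      rw [e3]
      exact step1h (Wq d z) (d:ℚ) (z:ℚ) (Wq d z ^ (n/3)) _ _ _ _ _ _ _ _ hw hd0
        hC0 hC1 hC2 (by rw [bcf_succ, hp, hq]) castC
  · -- r = 2
    have e0 : Kf d z n = Wq d z * Wq d z ^ (n/3) := by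
      unfold Kf; rw [if_neg (by omega), if_pos (by omega)]
    have e1 : Kf d z (n+1) = Wq d z * Wq d z ^ (n/3) := by
      unfold Kf
      rw [if_neg (by omega), if_neg (by omega), show (n+1)/3 = n/3 + 1 by omega, pow_succ]
      ring
    have e2 : Kf d z (n+2) = (d:ℚ) * (Wq d z * Wq d z ^ (n/3)) := by
      unfold Kf
      rw [if_pos (by omega), show (n+2)/3 = n/3 + 1 by omega, pow_succ]
      ring
    have e3 : Kf d z (n+3) = Wq d z * (Wq d z * Wq d z ^ (n/3)) := by
      unfold Kf
      rw [if_neg (by omega), if_pos (by omega), show (n+3)/3 = n/3 + 1 by omega, pow_succ]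
      ring
    have hp := hp2 (n+3) (by omega) (by omega)
    have hq := hq2 (n+3) (by omega) (by omega)
    rw [hWq] at hp hq
    rw [e0] at hA0 hB0 hC0
    rw [e1] at hA1 hB1 hC1
    rw [e2] at hA2 hB2 hC2
    refine ⟨?_, ?_, ?_⟩
    · show Kf d z (n+3) * bcf p q 0 1 (z:ℚ) (n+2+3) = (mu 3 0 d z (n+4) : ℚ)
      rw [e3]
      exact step2h (Wq d z) (d:ℚ) (z:ℚ) (Wq d z ^ (n/3)) _ _ _ _ _ _ _ _ hw hd0
        hA0 hA1 hA2 (by rw [bcf_succ, hp, hq]) castA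
    · show Kf d z (n+3) * bcf p q 1 0 0 (n+2+3) = (mu 3 1 d z (n+4) : ℚ)
      rw [e3]
      exact step2h (Wq d z) (d:ℚ) (z:ℚ) (Wq d z ^ (n/3)) _ _ _ _ _ _ _ _ hw hd0
        hB0 hB1 hB2 (by rw [bcf_succ, hp, hq]) castB
    · show Kf d z (n+3) * bcf p q 0 0 1 (n+2+3) = (mu 3 2 d z (n+4) : ℚ)
      rw [e3]
      exact step2h (Wq d z) (d:ℚ) (z:ℚ) (Wq d z ^ (n/3)) _ _ _ _ _ _ _ _ hw hd0
        hC0 hC1 hC2 (by rw [bcf_succ, hp, hq]) castC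


lemma mu_01 (d z : ℤ) : mu 3 0 d z 1 = z := by simp [mu, Finset.sum_range_succ, Nat.choose]
lemma mu_11 (d z : ℤ) : mu 3 1 d z 1 = 0 := by simp [mu, Finset.sum_range_succ, Nat.choose]
lemma mu_21 (d z : ℤ) : mu 3 2 d z 1 = 1 := by simp [mu, Finset.sum_range_succ, Nat.choose]
lemma mu_02 (d z : ℤ) : mu 3 0 d z 2 = z^2 := by simp [mu, Finset.sum_range_succ, Nat.choose]
lemma mu_12 (d z : ℤ) : mu 3 1 d z 2 = d := by simp [mu, Finset.sum_range_succ, Nat.choose]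
lemma mu_22 (d z : ℤ) : mu 3 2 d z 2 = 2*z := by simp [mu, Finset.sum_range_succ, Nat.choose]
lemma mu_03 (d z : ℤ) : mu 3 0 d z 3 = z^3 + d^2 := by simp [mu, Finset.sum_range_succ, Nat.choose]
lemma mu_13 (d z : ℤ) : mu 3 1 d z 3 = 3*d*z := by simp [mu, Finset.sum_range_succ, Nat.choose]
lemma mu_23 (d z : ℤ) : mu 3 2 d z 3 = 3*z^2 := by simp [mu, Finset.sum_range_succ, Nat.choose]

lemma good_all (d z : ℤ) (hd : 1 ≤ d) (hz : 1 ≤ z) (p q : ℕ → ℚ)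
    (hp1 : p 1 = 2 * (z : ℚ) / (d : ℚ))
    (hq1 : q 1 = -(z : ℚ) ^ 2 / (d : ℚ))
    (hp2 : ∀ n, 2 ≤ n → n % 3 = 2 →
      p n = 3 * (d : ℚ) * (z : ℚ) / ((z : ℚ) ^ 3 + (d : ℚ) ^ 2))
    (hq2 : ∀ n, 2 ≤ n → n % 3 = 2 →
      q n = -(3 * (z : ℚ) ^ 2) / ((z : ℚ) ^ 3 + (d : ℚ) ^ 2))
    (hp3 : ∀ n, 2 ≤ n → n % 3 = 0 → p n = 3 * (z : ℚ))
    (hq3 : ∀ n, 2 ≤ n → n % 3 = 0 →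
      q n = -(3 * (d : ℚ) * (z : ℚ) ^ 2) / ((z : ℚ) ^ 3 + (d : ℚ) ^ 2))
    (hp4 : ∀ n, 2 ≤ n → n % 3 = 1 → p n = 3 * (z : ℚ) / (d : ℚ))
    (hq4 : ∀ n, 2 ≤ n → n % 3 = 1 → q n = -(3 * (z : ℚ) ^ 2) / (d : ℚ)) :
    ∀ n, Good d z p q n := by
  have hd0 : (d:ℚ) ≠ 0 := by
    have : (0:ℚ) < (d:ℚ) := by exact_mod_cast lt_of_lt_of_le Int.zero_lt_one hd
    exact ne_of_gt this
  have hw : Wq d z ≠ 0 := ne_of_gt (Wq_pos d z hd hz)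
  have hWq : ((z:ℚ)^3 + (d:ℚ)^2) = Wq d z := rfl
  have hK0 : Kf d z 0 = 1 := by unfold Kf; norm_num
  have hK1 : Kf d z 1 = (d:ℚ) := by unfold Kf; norm_num
  have hK2 : Kf d z 2 = Wq d z := by unfold Kf; norm_num
  have g0 : Good d z p q 0 := by
    refine ⟨?_, ?_, ?_⟩
    · show Kf d z 0 * (z:ℚ) = (mu 3 0 d z 1 : ℚ)
      rw [hK0, mu_01, one_mul]
    · show Kf d z 0 * 0 = (mu 3 1 d z 1 : ℚ)
      rw [hK0, mu_11]; norm_num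
    · show Kf d z 0 * 1 = (mu 3 2 d z 1 : ℚ)
      rw [hK0, mu_21]; norm_num
  have bA3 : bcf p q 0 1 (z:ℚ) 3 = p 1 * (z:ℚ) + q 1 * 1 + 0 := rfl
  have bB3 : bcf p q 1 0 0 3 = p 1 * 0 + q 1 * 0 + 1 := rfl
  have bC3 : bcf p q 0 0 1 3 = p 1 * 1 + q 1 * 0 + 0 := rfl
  have g1 : Good d z p q 1 := by
    refine ⟨?_, ?_, ?_⟩
    · show Kf d z 1 * bcf p q 0 1 (z:ℚ) 3 = (mu 3 0 d z 2 : ℚ)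
      rw [hK1, bA3, hp1, hq1, mu_02]
      push_cast
      field_simp
      try ring
      try exact Or.inl trivial
    · show Kf d z 1 * bcf p q 1 0 0 3 = (mu 3 1 d z 2 : ℚ)
      rw [hK1, bB3, hp1, hq1, mu_12]
      field_simp
      ring
    · show Kf d z 1 * bcf p q 0 0 1 3 = (mu 3 2 d z 2 : ℚ)
      rw [hK1, bC3, hp1, hq1, mu_22]
      push_cast
      field_simp
      try ring
      try exact Or.inl trivial
  have hp2' := hp2 2 (by norm_num) (by norm_num)
  have hq2' := hq2 2 (by norm_num) (by norm_num)
  have g2 : Good d z p q 2 := by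
    have bA4 : bcf p q 0 1 (z:ℚ) 4 = p 2 * bcf p q 0 1 (z:ℚ) 3 + q 2 * bcf p q 0 1 (z:ℚ) 2 + bcf p q 0 1 (z:ℚ) 1 := rfl
    have bB4 : bcf p q 1 0 0 4 = p 2 * bcf p q 1 0 0 3 + q 2 * bcf p q 1 0 0 2 + bcf p q 1 0 0 1 := rfl
    have bC4 : bcf p q 0 0 1 4 = p 2 * bcf p q 0 0 1 3 + q 2 * bcf p q 0 0 1 2 + bcf p q 0 0 1 1 := rfl
    have hzq : bcf p q 0 1 (z:ℚ) 2 = (z:ℚ) := rfl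
    have h1q : bcf p q 0 1 (z:ℚ) 1 = 1 := rfl
    refine ⟨?_, ?_, ?_⟩
    · show Kf d z 2 * bcf p q 0 1 (z:ℚ) 4 = (mu 3 0 d z 3 : ℚ)
      rw [hK2, bA4, bA3, hzq, h1q, hp1, hq1, hp2', hq2', mu_03]
      unfold Wq
      push_cast
      field_simp
      try ring
      try exact Or.inl trivial
    · show Kf d z 2 * bcf p q 1 0 0 4 = (mu 3 1 d z 3 : ℚ)
      rw [hK2, bB4, bB3, show bcf p q 1 0 0 2 = 0 from rfl, show bcf p q 1 0 0 1 = 0 from rfl,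
        hp1, hq1, hp2', hq2', mu_13]
      unfold Wq
      push_cast
      field_simp
      try ring
      try exact Or.inl trivial
    · show Kf d z 2 * bcf p q 0 0 1 4 = (mu 3 2 d z 3 : ℚ)
      rw [hK2, bC4, bC3, show bcf p q 0 0 1 2 = 1 from rfl, show bcf p q 0 0 1 1 = 0 from rfl,
        hp1, hq1, hp2', hq2', mu_23]
      unfold Wq
      push_cast
      field_simp
      try ring
      try exact Or.inl trivial
  have H : ∀ n, Good d z p q n ∧ Good d z p q (n+1) ∧ Good d z p q (n+2) := by
    intro n
    induction n with
    | zero => exact ⟨g0, g1, g2⟩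
    | succ k ih =>
        exact ⟨ih.2.1, ih.2.2, good_step d z hd hz p q hp2 hq2 hp3 hq3 hp4 hq4 k ih.1 ih.2.1 ih.2.2⟩
  exact fun n => (H n).1

lemma Kf_ne (d z : ℤ) (hd : 1 ≤ d) (hz : 1 ≤ z) (n : ℕ) : Kf d z n ≠ 0 := by
  have hd0 : (0:ℚ) < (d:ℚ) := by exact_mod_cast lt_of_lt_of_le Int.zero_lt_one hd
  have hw : 0 < Wq d z := Wq_pos d z hd hz
  unfold Kf
  refine mul_ne_zero ?_ (pow_ne_zero _ (ne_of_gt hw))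
  split
  · exact ne_of_gt hd0
  · split
    · exact ne_of_gt hw
    · norm_num


/-- The convergents of the periodic bifurcating continued fraction
`[{z, 2z/d, repeat(3dz/(z³+d²), 3z, 3z/d)}, {0, −z²/d, repeat(−3z²/(z³+d²),
−3dz²/(z³+d²), −3z²/d)}]` are the ratios of the generalized Rédei polynomials:
`A_n/C_n = μ_{n+1}(3,0,d,z)/μ_{n+1}(3,2,d,z)` and
`B_n/C_n = μ_{n+1}(3,1,d,z)/μ_{n+1}(3,2,d,z)`. -/
theorem bcf_convergents_eq_mu_ratios (d z : ℤ) (hd : 1 ≤ d) (hz : 1 ≤ z)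
    (p q : ℕ → ℚ)
    (hp0 : p 0 = (z : ℚ))
    (hp1 : p 1 = 2 * (z : ℚ) / (d : ℚ))
    (hq0 : q 0 = 0)
    (hq1 : q 1 = -(z : ℚ) ^ 2 / (d : ℚ))
    (hp2 : ∀ n, 2 ≤ n → n % 3 = 2 →
      p n = 3 * (d : ℚ) * (z : ℚ) / ((z : ℚ) ^ 3 + (d : ℚ) ^ 2))
    (hq2 : ∀ n, 2 ≤ n → n % 3 = 2 →
      q n = -(3 * (z : ℚ) ^ 2) / ((z : ℚ) ^ 3 + (d : ℚ) ^ 2))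
    (hp3 : ∀ n, 2 ≤ n → n % 3 = 0 → p n = 3 * (z : ℚ))
    (hq3 : ∀ n, 2 ≤ n → n % 3 = 0 →
      q n = -(3 * (d : ℚ) * (z : ℚ) ^ 2) / ((z : ℚ) ^ 3 + (d : ℚ) ^ 2))
    (hp4 : ∀ n, 2 ≤ n → n % 3 = 1 → p n = 3 * (z : ℚ) / (d : ℚ))
    (hq4 : ∀ n, 2 ≤ n → n % 3 = 1 → q n = -(3 * (z : ℚ) ^ 2) / (d : ℚ))
    (n : ℕ) :
    mu 3 2 d z (n + 1) ≠ 0 ∧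
    bcf p q 0 0 1 (n + 2) ≠ 0 ∧
    bcf p q 0 1 (p 0) (n + 2) / bcf p q 0 0 1 (n + 2)
      = (mu 3 0 d z (n + 1) : ℚ) / (mu 3 2 d z (n + 1) : ℚ) ∧
    bcf p q 1 0 (q 0) (n + 2) / bcf p q 0 0 1 (n + 2)
      = (mu 3 1 d z (n + 1) : ℚ) / (mu 3 2 d z (n + 1) : ℚ) := by
  obtain ⟨hA, hB, hC⟩ := good_all d z hd hz p q hp1 hq1 hp2 hq2 hp3 hq3 hp4 hq4 n
  have hK := Kf_ne d z hd hz n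
  have hmupos := mu2_pos d z hd hz n
  have hmuq : (0:ℚ) < (mu 3 2 d z (n+1) : ℚ) := by exact_mod_cast hmupos
  have hCne : bcf p q 0 0 1 (n + 2) ≠ 0 := by
    intro h
    rw [h, mul_zero] at hC
    rw [← hC] at hmuq
    exact lt_irrefl _ hmuq
  refine ⟨ne_of_gt hmupos, hCne, ?_, ?_⟩
  · rw [hp0, ← hA, ← hC, mul_div_mul_left _ _ hK]
  · rw [hq0, ← hB, ← hC, mul_div_mul_left _ _ hK]
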